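/- Let D be a nonprincipal ultrafilter on ω and let ⟨P, <*⟩ be the ultraproduct of the finite chains ⟨n, <⟩ (n ∈ ω) over D: its universe is the quotient of the dependent functions f with f(n) ∈ {0,…,n−1} by f ∼ g ⟺ {n : f(n) = g(n)} ∈ D, with [f] <* [g] ⟺ {n : f(n) < g(n)} ∈ D. Then <* is irreflexive, but the ultrafilter extension of ⟨P, <*⟩ has a reflexive point: there is an ultrafilter u on P with (<*)^ue u u. Consequently, the class {⟨W,R⟩ : ⟨W,R⟩ ≡ its ultrafilter extension} is not closed under ultraproducts. -/

import Mathlib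

open Set Filter FirstOrder Language

/-- `R⁻(X)`: the set of elements having an `R`-successor in `X`. -/
def Rminus {W : Type*} (R : W → W → Prop) (X : Set W) : Set W := {w | ∃ s ∈ X, R w s}

/-- `R⁺(X)`: the set of elements having an `R`-predecessor in `X`. -/
def Rplus {W : Type*} (R : W → W → Prop) (X : Set W) : Set W := {s | ∃ w ∈ X, R w s}

/-- The relation of the ultrafilter extension: `R^ue u v ↔ ∀ X ∈ v, R⁻(X) ∈ u`. -/
def ueRel {W : Type*} (R : W → W → Prop) (u v : Ultrafilter W) : Prop :=
  ∀ X ∈ v, Rminus R X ∈ u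

/-- Out-degree `deg⁺(w)`, as an extended natural number. -/
noncomputable def degPlus {W : Type*} (R : W → W → Prop) (w : W) : ℕ∞ := {v | R w v}.encard

/-- In-degree `deg⁻(w)`, as an extended natural number. -/
noncomputable def degMinus {W : Type*} (R : W → W → Prop) (w : W) : ℕ∞ := {v | R v w}.encard

/-- A directed graph is bounded if `deg(w) = deg⁺(w) + deg⁻(w)` is uniformly bounded. -/
def Bounded {W : Type*} (R : W → W → Prop) : Prop :=
  ∃ n : ℕ, ∀ w, degPlus R w + degMinus R w ≤ (n : ℕ∞)

/-- A directed graph `⟨W,R⟩` as a structure for the first-order language `L_R` with a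
single binary relation symbol (`Language.graph`). -/
def grStruct {W : Type*} (R : W → W → Prop) : Language.graph.Structure W where
  RelMap | .adj => fun x => R (x 0) (x 1)

/-- `D` is ℵ₁-incomplete: some countable family of members of `D` has empty intersection. -/
def Aleph1Incomplete {I : Type*} (D : Ultrafilter I) : Prop :=
  ∃ J : ℕ → Set I, (∀ n, J n ∈ D) ∧ ⋂ n, J n = ∅

/-- The `n`-Hull `⟨w⟩ⁿ`: `⟨w⟩⁰ = {w}`, `⟨w⟩^{i+1} = ⟨w⟩^i ∪ R⁺(⟨w⟩^i) ∪ R⁻(⟨w⟩^i)`. -/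
def hull {W : Type*} (R : W → W → Prop) (w : W) : ℕ → Set W
  | 0 => {w}
  | n + 1 => hull R w n ∪ Rplus R (hull R w n) ∪ Rminus R (hull R w n)

/-- The ω-Hull `⟨w⟩^ω = ⋃ₙ ⟨w⟩ⁿ`. -/
def hullOmega {W : Type*} (R : W → W → Prop) (w : W) : Set W := ⋃ n, hull R w n

/-- A pointed isomorphism between the induced subgraphs on `A ⊆ V` and `A' ⊆ V'`
sending the base point `a` to `a'`. -/
def PointedIso {V V' : Type*} (R : V → V → Prop) (R' : V' → V' → Prop)
    (A : Set V) (A' : Set V') (a : V) (a' : V') : Prop :=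
  ∃ f : V → V', Set.BijOn f A A' ∧ f a = a' ∧
    ∀ x ∈ A, ∀ y ∈ A, (R x y ↔ R' (f x) (f y))

/-- The ultraproduct of the finite chains `⟨n,<⟩` over `D`: germs (modulo `D`) of
functions `f : ℕ → ℕ` satisfying `f n < n` `D`-almost everywhere (the `n = 0` factor is
empty, so the constraint can only be required on a member of `D`). -/
def UltraprodChains (D : Ultrafilter ℕ) : Type :=
  {x : (D : Filter ℕ).Germ ℕ //
    Filter.Germ.LiftRel (fun n k => k < n) (↑(id : ℕ → ℕ) : (D : Filter ℕ).Germ ℕ) x}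

/-- The relation `[f] <* [g] ↔ {n | f n < g n} ∈ D`. -/
def ltUltraprodChains (D : Ultrafilter ℕ) (x y : UltraprodChains D) : Prop :=
  Filter.Germ.LiftRel (· < ·) x.1 y.1


section AuxStmt17

/-- `ueRel` between principal ultrafilters is the original relation. -/
lemma ueRel_pure_iff {W : Type*} (R : W → W → Prop) (a b : W) :
    ueRel R (pure a) (pure b) ↔ R a b := by
  constructor
  · intro h
    have h1 : Rminus R {b} ∈ (pure a : Ultrafilter W) := h {b} rfl
    obtain ⟨s, hs, hRs⟩ := h1
    rwa [Set.mem_singleton_iff.1 hs] at hRs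
  · intro h X hX
    exact ⟨b, hX, h⟩

@[simp] lemma grStruct_relMap {W : Type*} (R : W → W → Prop) (x y : W) :
    @Structure.RelMap Language.graph W (grStruct R) 2 .adj ![x, y] = R x y := rfl

variable {D : Ultrafilter ℕ}

lemma finite_not_mem_of_nonprincipal (hD : ∀ n : ℕ, D ≠ pure n) {s : Set ℕ}
    (hs : s.Finite) : s ∉ D := by
  intro h
  obtain ⟨a, -, ha⟩ := Ultrafilter.eq_pure_of_finite_mem hs h
  exact hD a ha

lemma germ_lt_irrefl (a : (D : Filter ℕ).Germ ℕ) :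
    ¬ Filter.Germ.LiftRel (· < ·) a a := by
  induction a using Filter.Germ.inductionOn with
  | h f =>
    rw [Filter.Germ.liftRel_coe]
    intro h
    obtain ⟨n, hn⟩ := h.exists
    exact lt_irrefl _ hn

lemma germ_lt_trichot (a b : (D : Filter ℕ).Germ ℕ) :
    Filter.Germ.LiftRel (· < ·) a b ∨ a = b ∨ Filter.Germ.LiftRel (· < ·) b a := by
  induction a using Filter.Germ.inductionOn with
  | h f =>
    induction b using Filter.Germ.inductionOn with
    | h g =>
      rw [Filter.Germ.liftRel_coe, Filter.Germ.liftRel_coe, Filter.Germ.coe_eq]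
      by_cases h1 : ∀ᶠ n in (D : Filter ℕ), f n < g n
      · exact Or.inl h1
      · by_cases h2 : ∀ᶠ n in (D : Filter ℕ), g n < f n
        · exact Or.inr (Or.inr h2)
        · refine Or.inr (Or.inl ?_)
          have h1' : ∀ᶠ n in (D : Filter ℕ), ¬ f n < g n := Ultrafilter.eventually_not.2 h1
          have h2' : ∀ᶠ n in (D : Filter ℕ), ¬ g n < f n := Ultrafilter.eventually_not.2 h2
          filter_upwards [h1', h2'] with n hn1 hn2
          omega

lemma ultraprod_lt_trichot (x y : UltraprodChains D) :
    ltUltraprodChains D x y ∨ x = y ∨ ltUltraprodChains D y x := by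
  rcases germ_lt_trichot x.1 y.1 with h | h | h
  · exact Or.inl h
  · exact Or.inr (Or.inl (Subtype.ext h))
  · exact Or.inr (Or.inr h)

/-- The element of the ultraproduct represented by `n ↦ min k (n-1)`. -/
noncomputable def chainConst (D : Ultrafilter ℕ) (hD : ∀ n : ℕ, D ≠ pure n) (k : ℕ) :
    UltraprodChains D := by
  refine ⟨(↑(fun n => min k (n - 1)) : (D : Filter ℕ).Germ ℕ), ?_⟩
  rw [Filter.Germ.liftRel_coe]
  have h0 : ({0} : Set ℕ)ᶜ ∈ D :=
    Ultrafilter.compl_mem_iff_notMem.2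
      (finite_not_mem_of_nonprincipal hD (Set.finite_singleton 0))
  filter_upwards [h0] with n hn
  simp only [Set.mem_compl_iff, Set.mem_singleton_iff] at hn
  simp only [id_eq]
  omega

lemma chainConst_injective (hD : ∀ n : ℕ, D ≠ pure n) :
    Function.Injective (chainConst D hD) := by
  intro k k' h
  by_contra hkk
  have h1 : (↑(fun n => min k (n - 1)) : (D : Filter ℕ).Germ ℕ)
      = ↑(fun n => min k' (n - 1)) := congrArg Subtype.val h
  rw [Filter.Germ.coe_eq] at h1
  have h2 : {n : ℕ | min k (n - 1) = min k' (n - 1)} ∈ D := h1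
  refine finite_not_mem_of_nonprincipal hD (Set.finite_Iio (max k k' + 2))
    (D.toFilter.mem_of_superset h2 ?_)
  intro n hn
  simp only [Set.mem_setOf_eq] at hn
  simp only [Set.mem_Iio]
  omega

lemma ultraprod_infinite (hD : ∀ n : ℕ, D ≠ pure n) : Infinite (UltraprodChains D) :=
  Infinite.of_injective _ (chainConst_injective hD)

lemma ultraprod_reflexive_point (hD : ∀ n : ℕ, D ≠ pure n) :
    ∃ u : Ultrafilter (UltraprodChains D), ueRel (ltUltraprodChains D) u u := by
  haveI := ultraprod_infinite hD
  haveI : (cofinite : Filter (UltraprodChains D)).NeBot := Filter.cofinite_neBot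
  refine ⟨Ultrafilter.of cofinite, ?_⟩
  set u := Ultrafilter.of (cofinite : Filter (UltraprodChains D)) with hu
  have hle : (↑u : Filter (UltraprodChains D)) ≤ cofinite := Ultrafilter.of_le _
  intro X hX
  set M := {x | x ∈ X ∧ ∀ y ∈ X, ¬ ltUltraprodChains D x y} with hM
  have hMs : M.Subsingleton := by
    intro a ha b hb
    rcases ultraprod_lt_trichot a b with h | h | h
    · exact absurd h (ha.2 b hb.1)
    · exact h
    · exact absurd h (hb.2 a ha.1)
  have hMc : Mᶜ ∈ u := hle hMs.finite.compl_mem_cofinite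
  have hXM : X ∩ Mᶜ ∈ (u : Filter (UltraprodChains D)) :=
    Filter.inter_mem hX hMc
  refine Ultrafilter.mem_coe.1 (Filter.mem_of_superset hXM ?_)
  rintro x ⟨hxX, hxM⟩
  simp only [Set.mem_compl_iff, hM, Set.mem_setOf_eq, not_and, not_forall] at hxM
  obtain ⟨y, hyX, hy⟩ := hxM hxX
  exact ⟨y, hyX, not_not.1 hy⟩

end AuxStmt17

/-- each finite chain `⟨n,<⟩` is elementarily equivalent to its ultrafilter
extension, and for a nonprincipal `D` their ultraproduct `⟨P,<*⟩` is irreflexive while its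
ultrafilter extension has a reflexive point; hence `⟨P,<*⟩` is not elementarily equivalent
to its ultrafilter extension, so the class `{𝔉 : 𝔉 ≡ 𝔉^ue}` is not closed under
ultraproducts. -/
theorem stmt_17 (D : Ultrafilter ℕ) (hD : ∀ n : ℕ, D ≠ pure n) :
    (∀ n : ℕ,
      letI := grStruct (· < · : Fin n → Fin n → Prop)
      letI := grStruct (ueRel (· < · : Fin n → Fin n → Prop))
      Language.graph.ElementarilyEquivalent (Fin n) (Ultrafilter (Fin n))) ∧
    (∀ x : UltraprodChains D, ¬ ltUltraprodChains D x x) ∧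
    (∃ u : Ultrafilter (UltraprodChains D), ueRel (ltUltraprodChains D) u u) ∧
    ¬ (letI := grStruct (ltUltraprodChains D)
       letI := grStruct (ueRel (ltUltraprodChains D))
       Language.graph.ElementarilyEquivalent (UltraprodChains D)
         (Ultrafilter (UltraprodChains D))) := by
  refine ⟨fun n => ?_, fun x hx => germ_lt_irrefl x.1 hx, ultraprod_reflexive_point hD, ?_⟩
  · letI := grStruct (· < · : Fin n → Fin n → Prop)
    letI := grStruct (ueRel (· < · : Fin n → Fin n → Prop))
    have hsurj : Function.Surjective (pure : Fin n → Ultrafilter (Fin n)) := by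
      intro v
      obtain ⟨a, -, ha⟩ := Ultrafilter.eq_pure_of_finite_mem Set.finite_univ
        (Filter.univ_mem (f := (v : Filter (Fin n))))
      exact ⟨a, ha.symm⟩
    have e : Fin n ≃[Language.graph] Ultrafilter (Fin n) :=
      { toEquiv := Equiv.ofBijective pure ⟨Ultrafilter.pure_injective, hsurj⟩
        map_fun' := fun f _ => isEmptyElim f
        map_rel' := by
          rintro _ ⟨⟩ x
          exact ueRel_pure_iff (· < · : Fin n → Fin n → Prop) (x 0) (x 1) }
    exact StrongHomClass.elementarilyEquivalent e
  · intro h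
    letI := grStruct (ltUltraprodChains D)
    letI := grStruct (ueRel (ltUltraprodChains D))
    obtain ⟨u, hu⟩ := ultraprod_reflexive_point hD
    have hP : UltraprodChains D ⊨ Relations.irreflexive Language.adj :=
      Relations.realize_irreflexive.2 ⟨fun (x : UltraprodChains D) hx => germ_lt_irrefl x.1 hx⟩
    have hU := (h.realize_sentence (Relations.irreflexive Language.adj)).1 hP
    exact (Relations.realize_irreflexive.1 hU).irrefl u hu
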